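/- Let d ≥ 1, let x_1, …, x_{d+1} ∈ ℝ^d be affinely independent, let τ be their closed convex hull with Lebesgue measure |τ|, and let λ_1, …, λ_{d+1} be the barycentric coordinate functions of the simplex. Then for all indices k, l ∈ {1, …, d+1}: ∫_τ λ_k(x) λ_l(x) dx = |τ| (1 + δ_{kl}) / ((d+1)(d+2)), where δ_{kl} is the Kronecker delta. -/

import Mathlib

open MeasureTheory
open scoped Pointwise

noncomputable section

def Sset (d : ℕ) : Set (Fin d → ℝ) := {y | (∀ i, 0 ≤ y i) ∧ ∑ i, y i ≤ 1}

lemma isClosed_Sset (d : ℕ) : IsClosed (Sset d) := by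
  have h1 : Sset d = (⋂ i, {y : Fin d → ℝ | 0 ≤ y i}) ∩ {y | ∑ i, y i ≤ 1} := by
    ext y; simp [Sset, Set.mem_iInter]
  rw [h1]
  exact (isClosed_iInter fun i => isClosed_le continuous_const (continuous_apply i)).inter
    (isClosed_le (by continuity) continuous_const)

lemma Sset_subset_box (d : ℕ) : Sset d ⊆ Set.pi Set.univ fun _ => Set.Icc (0:ℝ) 1 := by
  intro y hy i _
  exact ⟨hy.1 i, le_trans (Finset.single_le_sum (f := y) (fun j _ => hy.1 j)
    (Finset.mem_univ i)) hy.2⟩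

lemma isCompact_Sset (d : ℕ) : IsCompact (Sset d) :=
  (isCompact_univ_pi fun _ => isCompact_Icc).of_isClosed_subset (isClosed_Sset d)
    (Sset_subset_box d)

lemma measurableSet_Sset (d : ℕ) : MeasurableSet (Sset d) :=
  (isClosed_Sset d).measurableSet

def S2 (d : ℕ) : Set (ℝ × (Fin d → ℝ)) :=
  {p | 0 ≤ p.1 ∧ (∀ i, 0 ≤ p.2 i) ∧ p.1 + ∑ i, p.2 i ≤ 1}

lemma isClosed_S2 (d : ℕ) : IsClosed (S2 d) := by
  have h1 : S2 d = {p : ℝ × (Fin d → ℝ) | 0 ≤ p.1} ∩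
      ((⋂ i, {p : ℝ × (Fin d → ℝ) | 0 ≤ p.2 i}) ∩ {p | p.1 + ∑ i, p.2 i ≤ 1}) := by
    ext p; simp only [S2, Set.mem_setOf_eq, Set.mem_inter_iff, Set.mem_iInter]
  rw [h1]
  exact (isClosed_le continuous_const continuous_fst).inter
    ((isClosed_iInter fun i => isClosed_le continuous_const
      ((continuous_apply i).comp continuous_snd)).inter
      (isClosed_le (continuous_fst.add (by exact (continuous_finset_sum _ fun i _ => (continuous_apply i).comp continuous_snd : Continuous fun p : ℝ × (Fin d → ℝ) => ∑ i, p.2 i))) continuous_const))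

lemma isCompact_S2 (d : ℕ) : IsCompact (S2 d) := by
  apply ((isCompact_Icc (a := (0:ℝ)) (b := 1)).prod
    (isCompact_univ_pi fun _ : Fin d => isCompact_Icc (a := (0:ℝ)) (b := 1))).of_isClosed_subset
    (isClosed_S2 d)
  rintro ⟨t, z⟩ ⟨h1, h2, h3⟩
  have hz : 0 ≤ ∑ i, z i := Finset.sum_nonneg fun i _ => h2 i
  refine ⟨⟨h1, by linarith⟩, fun i _ => ⟨h2 i, ?_⟩⟩
  have := Finset.single_le_sum (f := z) (fun j _ => h2 j) (Finset.mem_univ i)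
  linarith

lemma measurableSet_S2 (d : ℕ) : MeasurableSet (S2 d) := (isClosed_S2 d).measurableSet

lemma dirichlet_zero (b : ℕ) :
    ∫ y in Sset 0, (∏ i, y i ^ (0 : Fin 0 → ℕ) i) * (1 - ∑ i, y i) ^ b ∂volume = 1 := by
  have h : Sset 0 = Set.univ := by
    ext y; simp [Sset]
  rw [h]
  simp only [Finset.univ_eq_empty, Finset.prod_empty, Finset.sum_empty, sub_zero, one_pow,
    mul_one, Measure.restrict_univ, integral_const, smul_eq_mul]
  rw [show (volume : Measure (Fin 0 → ℝ)) = Measure.dirac (isEmptyElim) from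
    MeasureTheory.Measure.volume_pi_eq_dirac _]
  simp

lemma dirichlet_step (d : ℕ) (c b : ℕ) (a : Fin d → ℕ) :
    ∫ y in Sset (d+1), (∏ i, y i ^ (Fin.cons c a : Fin (d+1) → ℕ) i) * (1 - ∑ i, y i) ^ b ∂volume
      = (∫ t in (0:ℝ)..1, t ^ c * (1 - t) ^ (d + ∑ i, a i + b)) *
        ∫ z in Sset d, (∏ i, z i ^ a i) * (1 - ∑ i, z i) ^ b ∂volume := by
  classical
  set K : ℝ := ∫ z in Sset d, (∏ i, z i ^ a i) * (1 - ∑ i, z i) ^ b ∂volume with hK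
  set G : ℝ × (Fin d → ℝ) → ℝ :=
    fun p => p.1 ^ c * ((∏ i, p.2 i ^ a i) * (1 - p.1 - ∑ i, p.2 i) ^ b) with hG
  have hcontG : Continuous G := by
    apply (continuous_fst.pow c).mul
    apply Continuous.mul
    · exact continuous_finset_prod _ fun i _ => ((continuous_apply i).comp continuous_snd).pow _
    · exact (((continuous_const.sub continuous_fst).sub
        (continuous_finset_sum _ fun i _ => (continuous_apply i).comp continuous_snd)).pow b)
  set e := MeasurableEquiv.piFinSuccAbove (fun _ : Fin (d+1) => ℝ) 0 with he
  have hpre : e ⁻¹' (S2 d) = Sset (d+1) := by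
    ext y
    simp only [Set.mem_preimage, S2, Sset, Set.mem_setOf_eq, he,
      MeasurableEquiv.piFinSuccAbove_apply, Fin.removeNth, Fin.zero_succAbove,
      Fin.sum_univ_succ]
    rw [Fin.forall_fin_succ]
    tauto
  have hGe : ∀ y : Fin (d+1) → ℝ, G (e y)
      = (∏ i, y i ^ (Fin.cons c a : Fin (d+1) → ℕ) i) * (1 - ∑ i, y i) ^ b := by
    intro y
    simp only [hG, he, MeasurableEquiv.piFinSuccAbove_apply, Fin.insertNthEquiv_symm_apply,
      Fin.removeNth, Fin.zero_succAbove, Fin.prod_univ_succ, Fin.sum_univ_succ, Fin.cons_zero,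
      Fin.cons_succ]
    ring_nf
  have h1 : (∫ y in Sset (d+1),
      (∏ i, y i ^ (Fin.cons c a : Fin (d+1) → ℕ) i) * (1 - ∑ i, y i) ^ b ∂volume)
      = ∫ p in S2 d, G p ∂volume := by
    have h2 := (volume_preserving_piFinSuccAbove (fun _ : Fin (d+1) => ℝ) 0).setIntegral_preimage_emb
      e.measurableEmbedding G (S2 d)
    rw [← h2, hpre]
    exact (setIntegral_congr_fun (measurableSet_Sset _) fun y _ => (hGe y).symm)
  rw [h1]
  have hint : Integrable ((S2 d).indicator G) (volume.prod volume) := by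
    rw [← Measure.volume_eq_prod, integrable_indicator_iff (measurableSet_S2 d)]
    exact hcontG.continuousOn.integrableOn_compact (isCompact_S2 d)
  rw [← integral_indicator (measurableSet_S2 d), Measure.volume_eq_prod,
    MeasureTheory.integral_prod _ hint]
  have hout0 : ∀ t ∉ Set.Icc (0:ℝ) 1, (∫ z, (S2 d).indicator G (t, z) ∂volume) = 0 := by
    intro t ht
    have hz : ∀ z : Fin d → ℝ, (S2 d).indicator G (t, z) = 0 := by
      intro z
      apply Set.indicator_of_notMem
      rintro ⟨h1', h2', h3'⟩
      exact ht ⟨h1', by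
        have : (0:ℝ) ≤ ∑ i, z i := Finset.sum_nonneg fun i _ => h2' i
        linarith⟩
    simp [hz]
  rw [← setIntegral_eq_integral_of_forall_compl_eq_zero hout0,
    integral_Icc_eq_integral_Ioo]
  have hmid : ∀ t ∈ Set.Ioo (0:ℝ) 1, (∫ z, (S2 d).indicator G (t, z) ∂volume)
      = t ^ c * (1 - t) ^ (d + ∑ i, a i + b) * K := by
    intro t ht
    obtain ⟨ht0, ht1⟩ := ht
    have h1t : (0:ℝ) < 1 - t := by linarith
    have h1t' : (1:ℝ) - t ≠ 0 := ne_of_gt h1t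
    have hsec : ∀ z : Fin d → ℝ, ((t, z) ∈ S2 d) ↔ z ∈ (1 - t) • Sset d := by
      intro z
      constructor
      · rintro ⟨-, hz, hsum⟩
        refine ⟨(1-t)⁻¹ • z, ⟨fun i => ?_, ?_⟩, smul_inv_smul₀ h1t' z⟩
        · have := hz i
          simp only [Pi.smul_apply, smul_eq_mul]
          positivity
        · have hle : ∑ i, z i ≤ 1 - t := by linarith
          have : ∑ i, ((1-t)⁻¹ • z) i = (1-t)⁻¹ * ∑ i, z i := by
            simp [Finset.mul_sum]
          rw [this]
          rw [inv_mul_le_iff₀ h1t]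
          linarith
      · rintro ⟨w, ⟨hw, hws⟩, rfl⟩
        have hsw : (0:ℝ) ≤ ∑ i, w i := Finset.sum_nonneg fun i _ => hw i
        refine ⟨le_of_lt ht0, fun i => ?_, ?_⟩
        · simp only [Pi.smul_apply, smul_eq_mul]
          exact mul_nonneg (le_of_lt h1t) (hw i)
        · have hsum : ∑ i, ((1-t) • w) i = (1-t) * ∑ i, w i := by
            simp [Finset.mul_sum]
          rw [hsum]
          nlinarith
    have hind : (fun z => (S2 d).indicator G (t, z))
        = Set.indicator ((1-t) • Sset d) (fun z => G (t, z)) := by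
      funext z
      by_cases h : (t, z) ∈ S2 d
      · rw [Set.indicator_of_mem h, Set.indicator_of_mem ((hsec z).1 h)]
      · rw [Set.indicator_of_notMem h, Set.indicator_of_notMem (fun hc => h ((hsec z).2 hc))]
    rw [hind]
    have hpow : (0:ℝ) < (1 - t) ^ d := pow_pos h1t d
    have hcv := MeasureTheory.Measure.integral_comp_smul (volume : Measure (Fin d → ℝ))
      (Set.indicator ((1-t) • Sset d) (fun z => G (t, z))) (1 - t)
    rw [Module.finrank_fin_fun, abs_of_pos (inv_pos.2 hpow)] at hcv
    have hcv' : (∫ z, Set.indicator ((1-t) • Sset d) (fun z => G (t, z)) z ∂volume)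
        = (1-t) ^ d * ∫ w, Set.indicator ((1-t) • Sset d) (fun z => G (t, z)) ((1-t) • w) ∂volume := by
      rw [hcv, smul_eq_mul, ← mul_assoc, mul_inv_cancel₀ (ne_of_gt hpow), one_mul]
    rw [hcv']
    have hindpt : ∀ w : Fin d → ℝ, Set.indicator ((1-t) • Sset d) (fun z => G (t, z)) ((1-t) • w)
        = Set.indicator (Sset d) (fun w => G (t, (1-t) • w)) w := by
      intro w
      by_cases hw : w ∈ Sset d
      · rw [Set.indicator_of_mem hw, Set.indicator_of_mem
          ((Set.smul_mem_smul_set_iff₀ h1t' _ _).2 hw)]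
      · rw [Set.indicator_of_notMem hw, Set.indicator_of_notMem
          (fun hc => hw ((Set.smul_mem_smul_set_iff₀ h1t' _ _).1 hc))]
    simp only [hindpt]
    rw [integral_indicator (measurableSet_Sset d)]
    have key : ∀ w : Fin d → ℝ, G (t, (1-t) • w)
        = (t ^ c * (1-t) ^ (∑ i, a i) * (1-t) ^ b) * ((∏ i, w i ^ a i) * (1 - ∑ i, w i) ^ b) := by
      intro w
      have hp1 : ∏ i, ((1-t) • w) i ^ a i = (1-t) ^ (∑ i, a i) * ∏ i, w i ^ a i := by
        simp only [Pi.smul_apply, smul_eq_mul, mul_pow, Finset.prod_mul_distrib,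
          Finset.prod_pow_eq_pow_sum]
      have hp2 : (1 - t - ∑ i, ((1-t) • w) i) = (1-t) * (1 - ∑ i, w i) := by
        simp only [Pi.smul_apply, smul_eq_mul, ← Finset.mul_sum]
        ring
      simp only [hG, hp1, hp2, mul_pow]
      ring
    rw [setIntegral_congr_fun (measurableSet_Sset d) fun w _ => key w,
      MeasureTheory.integral_const_mul]
    rw [← hK]
    rw [pow_add, pow_add]
    ring
  rw [setIntegral_congr_fun measurableSet_Ioo hmid]
  rw [intervalIntegral.integral_of_le zero_le_one, integral_Ioc_eq_integral_Ioo]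
  rw [← MeasureTheory.integral_mul_const]

lemma beta_nat' (m j : ℕ) :
    ∫ t in (0:ℝ)..1, t ^ j * (1 - t) ^ m
      = (Nat.factorial j * Nat.factorial m : ℝ) / Nat.factorial (j + m + 1) := by
  induction m generalizing j with
  | zero =>
    simp [integral_pow]
    rw [Nat.factorial_succ]
    push_cast
    field_simp
  | succ m ih =>
    have hj1 : ((j:ℝ) + 1) ≠ 0 := by positivity
    have hu : ∀ t ∈ Set.uIcc (0:ℝ) 1, HasDerivAt (fun t : ℝ => (1 - t) ^ (m+1))
        (-((m:ℝ)+1) * (1 - t) ^ m) t := by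
      intro t _
      have h := (((hasDerivAt_id t).const_sub 1).pow (m+1))
      simp only [id] at h
      refine h.congr_deriv ?_
      simp only [Nat.add_sub_cancel]
      push_cast
      ring
    have hv : ∀ t ∈ Set.uIcc (0:ℝ) 1, HasDerivAt (fun t : ℝ => t ^ (j+1) / ((j:ℝ)+1))
        (t ^ j) t := by
      intro t _
      have h := (hasDerivAt_pow (j+1) t).div_const ((j:ℝ)+1)
      refine h.congr_deriv ?_
      simp only [Nat.add_sub_cancel]
      push_cast
      field_simp
    have key := intervalIntegral.integral_mul_deriv_eq_deriv_mul hu hv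
      (by apply Continuous.intervalIntegrable; continuity)
      (by apply Continuous.intervalIntegrable; continuity)
    have e1 : (∫ t in (0:ℝ)..1, t ^ j * (1 - t) ^ (m+1))
        = ∫ t in (0:ℝ)..1, (1 - t) ^ (m+1) * t ^ j := by
      apply intervalIntegral.integral_congr; intro t _; ring
    rw [e1, key]
    have e2 : (∫ x in (0:ℝ)..1, -((m:ℝ)+1) * (1 - x) ^ m * (x ^ (j+1) / ((j:ℝ)+1)))
        = (-((m:ℝ)+1)/((j:ℝ)+1)) * ∫ x in (0:ℝ)..1, x ^ (j+1) * (1 - x) ^ m := by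
      rw [← intervalIntegral.integral_const_mul]
      apply intervalIntegral.integral_congr; intro t _; ring
    rw [e2, ih (j+1)]
    have hfe : j + 1 + m + 1 = j + (m+1) + 1 := by ring
    rw [hfe]
    have h3 : (Nat.factorial (j + (m+1) + 1) : ℝ) ≠ 0 := by
      exact_mod_cast Nat.factorial_ne_zero _
    rw [show Nat.factorial (j+1) = (j+1) * Nat.factorial j from Nat.factorial_succ j,
        show Nat.factorial (m+1) = (m+1) * Nat.factorial m from Nat.factorial_succ m]
    push_cast
    rw [sub_self, zero_pow (Nat.succ_ne_zero m), zero_mul]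
    rw [show (0:ℝ) ^ (j+1) = 0 from zero_pow (Nat.succ_ne_zero j)]
    field_simp
    ring

lemma dirichlet (d : ℕ) (a : Fin d → ℕ) (b : ℕ) :
    ∫ y in Sset d, (∏ i, y i ^ a i) * (1 - ∑ i, y i) ^ b ∂volume
      = (∏ i, (Nat.factorial (a i) : ℝ)) * Nat.factorial b
        / Nat.factorial (d + ∑ i, a i + b) := by
  induction d with
  | zero =>
    have h : Sset 0 = Set.univ := by ext y; simp [Sset]
    rw [h]
    simp only [Finset.univ_eq_empty, Finset.prod_empty, Finset.sum_empty, sub_zero, one_pow,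
      mul_one, Measure.restrict_univ, integral_const, smul_eq_mul, Nat.add_zero, Nat.zero_add,
      one_mul]
    rw [show (volume : Measure (Fin 0 → ℝ)) = Measure.dirac (isEmptyElim) from
      MeasureTheory.Measure.volume_pi_eq_dirac _]
    simp [div_self (show (Nat.factorial b : ℝ) ≠ 0 from by
      exact_mod_cast Nat.factorial_ne_zero b)]
  | succ d ih =>
    have hstep := dirichlet_step d (a 0) b (Fin.tail a)
    rw [Fin.cons_self_tail a] at hstep
    rw [hstep, ih (Fin.tail a), beta_nat' (d + ∑ i, Fin.tail a i + b) (a 0)]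
    have hsum : ∑ i, a i = a 0 + ∑ i, Fin.tail a i := by
      rw [Fin.sum_univ_succ]; rfl
    have hprod : (∏ i, (Nat.factorial (a i) : ℝ))
        = (Nat.factorial (a 0) : ℝ) * ∏ i, (Nat.factorial (Fin.tail a i) : ℝ) := by
      rw [Fin.prod_univ_succ]; rfl
    have harg : a 0 + (d + ∑ i, Fin.tail a i + b) + 1 = d + 1 + ∑ i, a i + b := by
      rw [hsum]; ring
    rw [hprod, harg, hsum]
    have h1 : (Nat.factorial (d + ∑ i, Fin.tail a i + b) : ℝ) ≠ 0 := by
      exact_mod_cast Nat.factorial_ne_zero _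
    have h2 : (Nat.factorial (d + 1 + (a 0 + ∑ i, Fin.tail a i) + b) : ℝ) ≠ 0 := by
      exact_mod_cast Nat.factorial_ne_zero _
    have h3 : d + ∑ i, Fin.tail a i + b = d + ∑ i, Fin.tail a i + b := rfl
    field_simp

lemma volume_Sset (d : ℕ) : (volume (Sset d)).toReal = 1 / Nat.factorial d := by
  have h := dirichlet d 0 0
  have heq : ∀ y : Fin d → ℝ, (∏ i, y i ^ (0 : Fin d → ℕ) i) * (1 - ∑ i, y i) ^ (0:ℕ) = 1 := by
    intro y; simp
  rw [setIntegral_congr_fun (measurableSet_Sset d) fun y _ => heq y] at h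
  simpa [measureReal_def] using h

lemma prod_pow_ite (d : ℕ) (y : Fin d → ℝ) (j : Fin d) :
    ∏ i, y i ^ (if i = j then 1 else 0 : ℕ) = y j := by
  rw [Finset.prod_eq_single j (fun i _ hij => by simp [hij]) (by simp)]
  simp

lemma helper1 (d : ℕ) :
    ∫ y in Sset d, (1 - ∑ i, y i) ^ (2:ℕ) ∂volume = 2 / (Nat.factorial (d+2) : ℝ) := by
  have h := dirichlet d 0 2
  have heq : ∀ y : Fin d → ℝ, (∏ i, y i ^ (0 : Fin d → ℕ) i) * (1 - ∑ i, y i) ^ (2:ℕ)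
      = (1 - ∑ i, y i) ^ (2:ℕ) := by intro y; simp
  rw [setIntegral_congr_fun (measurableSet_Sset d) fun y _ => heq y] at h
  simpa using h

lemma helper2 (d : ℕ) (j : Fin d) :
    ∫ y in Sset d, y j * (1 - ∑ i, y i) ∂volume = 1 / (Nat.factorial (d+2) : ℝ) := by
  have h := dirichlet d (fun m => if m = j then 1 else 0) 1
  have heq : ∀ y : Fin d → ℝ,
      (∏ i, y i ^ (if i = j then 1 else 0 : ℕ)) * (1 - ∑ i, y i) ^ (1:ℕ)
      = y j * (1 - ∑ i, y i) := by
    intro y; rw [prod_pow_ite, pow_one]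
  rw [setIntegral_congr_fun (measurableSet_Sset d) fun y _ => heq y] at h
  have hs : ∑ m, (if m = j then 1 else 0 : ℕ) = 1 := by
    rw [Finset.sum_ite_eq' Finset.univ j (fun _ => 1)]; simp
  have hp : (∏ m, (Nat.factorial (if m = j then 1 else 0) : ℝ)) = 1 :=
    Finset.prod_eq_one fun m _ => by split <;> simp
  rw [hs, hp] at h
  simpa using h

lemma helper3 (d : ℕ) (i j : Fin d) :
    ∫ y in Sset d, y i * y j ∂volume
      = (1 + if i = j then (1:ℝ) else 0) / (Nat.factorial (d+2) : ℝ) := by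
  classical
  set a : Fin d → ℕ := fun m => (if m = i then 1 else 0) + (if m = j then 1 else 0) with ha
  have h := dirichlet d a 0
  have heq : ∀ y : Fin d → ℝ, (∏ m, y m ^ a m) * (1 - ∑ m, y m) ^ (0:ℕ) = y i * y j := by
    intro y
    simp only [ha, pow_add, Finset.prod_mul_distrib, pow_zero, mul_one]
    rw [prod_pow_ite, prod_pow_ite]
  rw [setIntegral_congr_fun (measurableSet_Sset d) fun y _ => heq y] at h
  have hs : ∑ m, a m = 2 := by
    simp only [ha, Finset.sum_add_distrib]
    rw [Finset.sum_ite_eq' Finset.univ i (fun _ => 1), Finset.sum_ite_eq' Finset.univ j (fun _ => 1)]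
    simp
  have hp : (∏ m, (Nat.factorial (a m) : ℝ)) = 1 + if i = j then (1:ℝ) else 0 := by
    by_cases hij : i = j
    · subst hij
      have : ∀ m, (Nat.factorial (a m) : ℝ) = if m = i then 2 else 1 := by
        intro m; by_cases hm : m = i <;> simp [ha, hm]
      rw [Finset.prod_congr rfl fun m _ => this m, Finset.prod_ite_eq' Finset.univ i fun _ => (2:ℝ)]
      norm_num
    · have hone : ∀ m, (Nat.factorial (a m) : ℝ) = 1 := by
        intro m
        by_cases hmi : m = i
        · subst hmi; simp [ha, hij]
        · by_cases hmj : m = j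
          · simp [ha, hmi, hmj, Ne.symm hij]
          · simp [ha, hmi, hmj]
      rw [Finset.prod_congr rfl fun m _ => hone m]
      simp [hij]
  rw [hs, hp] at h
  simpa using h

def bary (d : ℕ) (j : Fin (d+1)) (y : Fin d → ℝ) : ℝ :=
  Fin.cases (1 - ∑ i, y i) (fun i => y i) j

lemma bary_core (d : ℕ) (k l : Fin (d+1)) :
    ∫ y in Sset d, bary d k y * bary d l y ∂volume
      = (volume (Sset d)).toReal * (1 + if k = l then (1:ℝ) else 0)
        / (((d:ℝ) + 1) * ((d:ℝ) + 2)) := by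
  have hd2 : ((Nat.factorial (d+2) : ℝ)) = (Nat.factorial d : ℝ) * (((d:ℝ)+1) * ((d:ℝ)+2)) := by
    rw [show d + 2 = (d+1)+1 from rfl, Nat.factorial_succ, Nat.factorial_succ]
    push_cast; ring
  have hdne : (Nat.factorial d : ℝ) ≠ 0 := by exact_mod_cast Nat.factorial_ne_zero d
  have h12 : (((d:ℝ)+1) * ((d:ℝ)+2)) ≠ 0 := by positivity
  suffices h : ∫ y in Sset d, bary d k y * bary d l y ∂volume
      = (1 + if k = l then (1:ℝ) else 0) / (Nat.factorial (d+2) : ℝ) by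
    rw [h, volume_Sset, hd2]
    field_simp
  induction k using Fin.cases with
  | zero =>
    induction l using Fin.cases with
    | zero =>
      have heq : ∀ y : Fin d → ℝ, bary d 0 y * bary d 0 y = (1 - ∑ i, y i) ^ (2:ℕ) := by
        intro y; simp [bary, sq]
      rw [setIntegral_congr_fun (measurableSet_Sset d) fun y _ => heq y, helper1]
      norm_num
    | succ j =>
      have heq : ∀ y : Fin d → ℝ, bary d 0 y * bary d j.succ y = y j * (1 - ∑ i, y i) := by
        intro y; simp [bary]; ring
      rw [setIntegral_congr_fun (measurableSet_Sset d) fun y _ => heq y, helper2]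
      simp [(Fin.succ_ne_zero j).symm]
  | succ i =>
    induction l using Fin.cases with
    | zero =>
      have heq : ∀ y : Fin d → ℝ, bary d i.succ y * bary d 0 y = y i * (1 - ∑ i, y i) := by
        intro y; simp [bary]
      rw [setIntegral_congr_fun (measurableSet_Sset d) fun y _ => heq y, helper2]
      simp [Fin.succ_ne_zero i]
    | succ j =>
      have heq : ∀ y : Fin d → ℝ, bary d i.succ y * bary d j.succ y = y i * y j := by
        intro y; simp [bary]
      rw [setIntegral_congr_fun (measurableSet_Sset d) fun y _ => heq y, helper3]
      simp [Fin.succ_inj]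

lemma Sset_eq_hull (d : ℕ) :
    Sset d = convexHull ℝ (insert (0 : Fin d → ℝ) (Set.range fun i => Pi.single i (1:ℝ))) := by
  apply Set.Subset.antisymm
  · intro y hy
    obtain ⟨hy0, hy1⟩ := hy
    have hmem := Finset.centerMass_mem_convexHull (s := insert (0 : Fin d → ℝ)
      (Set.range fun i => Pi.single i (1:ℝ))) (t := (Finset.univ : Finset (Fin (d+1))))
      (w := Fin.cons (1 - ∑ i, y i) y)
      (z := Fin.cons (0 : Fin d → ℝ) (fun i => Pi.single i (1:ℝ)))
      (hw₀ := by
        intro i _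
        induction i using Fin.cases with
        | zero => simpa using by linarith
        | succ j => simpa using hy0 j)
      (hws := by
        rw [Fin.sum_univ_succ]
        simp)
      (hz := by
        intro i _
        induction i using Fin.cases with
        | zero => exact Set.mem_insert _ _
        | succ j => exact Set.mem_insert_of_mem _ ⟨j, by simp⟩)
    have hsum1 : ∑ i, (Fin.cons (1 - ∑ i, y i) y : Fin (d+1) → ℝ) i = 1 := by
      rw [Fin.sum_univ_succ]; simp
    rw [Finset.centerMass_eq_of_sum_1 _ _ hsum1] at hmem
    convert hmem using 1
    rw [Fin.sum_univ_succ]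
    simp only [Fin.cons_zero, Fin.cons_succ, smul_zero, zero_add]
    funext j
    rw [Finset.sum_apply]
    simp only [Pi.smul_apply, Pi.single_apply, smul_eq_mul, mul_ite, mul_one, mul_zero]
    rw [Finset.sum_ite_eq Finset.univ j y]
    simp
  · apply convexHull_min
    · intro z hz
      rcases hz with rfl | ⟨i, rfl⟩
      · exact ⟨fun i => le_refl 0, by simp⟩
      · refine ⟨fun j => by simp [Pi.single_apply]; split <;> norm_num, ?_⟩
        simp [Pi.single_apply, Finset.sum_ite_eq]
    · intro y hy z hz a b ha hb hab
      obtain ⟨hy0, hy1⟩ := hy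
      obtain ⟨hz0, hz1⟩ := hz
      constructor
      · intro i
        simp only [Pi.add_apply, Pi.smul_apply, smul_eq_mul]
        exact add_nonneg (mul_nonneg ha (hy0 i)) (mul_nonneg hb (hz0 i))
      · simp only [Pi.add_apply, Pi.smul_apply, smul_eq_mul]
        rw [Finset.sum_add_distrib, ← Finset.mul_sum, ← Finset.mul_sum]
        nlinarith

/-- For the barycentric coordinate functions `λ_1, …, λ_{d+1}` of a
nondegenerate `d`-simplex `τ` in `ℝ^d` (the unique affine functions with
`λ_i(x_j) = δ_{ij}`), one has `∫_τ λ_k λ_l = |τ| (1 + δ_{kl}) / ((d+1)(d+2))`. -/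
theorem barycentric_mass_matrix
    (d : ℕ) (hd : 1 ≤ d)
    (x : Fin (d + 1) → EuclideanSpace ℝ (Fin d))
    (hx : AffineIndependent ℝ x)
    (τ : Set (EuclideanSpace ℝ (Fin d)))
    (hτ : τ = convexHull ℝ (Set.range x))
    (lam : Fin (d + 1) → (EuclideanSpace ℝ (Fin d) →ᵃ[ℝ] ℝ))
    (hlam : ∀ i j, lam i (x j) = if i = j then 1 else 0)
    (k l : Fin (d + 1)) :
    ∫ y in τ, lam k y * lam l y =
      (volume τ).toReal * (1 + if k = l then (1 : ℝ) else 0) /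
        (((d : ℝ) + 1) * ((d : ℝ) + 2)) := by
  classical
  set q := (MeasurableEquiv.toLp 2 (Fin d → ℝ)).symm with hq
  set v : Fin d → EuclideanSpace ℝ (Fin d) := fun i => x i.succ - x 0 with hv
  -- linear independence of the edge vectors
  have hli : LinearIndependent ℝ v := by
    have hx' := (affineIndependent_iff_linearIndependent_vsub ℝ x 0).1 hx
    have hinj : Function.Injective
        (fun i : Fin d => (⟨i.succ, Fin.succ_ne_zero i⟩ : {j : Fin (d+1) // j ≠ 0})) := by
      intro a b h
      have := congrArg Subtype.val h
      exact Fin.succ_injective d this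
    have h2 := hx'.comp _ hinj
    exact h2
  set AL : EuclideanSpace ℝ (Fin d) →ₗ[ℝ] EuclideanSpace ℝ (Fin d) :=
    { toFun := fun y => ∑ i, y i • v i
      map_add' := by
        intro y z
        simp only [PiLp.add_apply, add_smul]
        rw [Finset.sum_add_distrib]
      map_smul' := by
        intro c y
        simp only [PiLp.smul_apply, smul_eq_mul, RingHom.id_apply, Finset.smul_sum, smul_smul] }
    with hAL
  have hALapply : ∀ y : EuclideanSpace ℝ (Fin d), AL y = ∑ i, y i • v i := fun _ => rfl
  have hALinj : Function.Injective AL := by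
    intro y z h
    have h0 : AL (y - z) = 0 := by rw [map_sub, h, sub_self]
    have h1 : ∀ i, (y - z) i = 0 := by
      intro i
      exact Fintype.linearIndependent_iff.1 hli (fun i => (y - z) i)
        (by rw [show (∑ i, (y-z) i • v i) = 0 from hALapply (y-z) ▸ h0]) i
    have h2 : y - z = 0 := by
      ext i
      exact h1 i
    exact sub_eq_zero.1 h2
  set T : EuclideanSpace ℝ (Fin d) → EuclideanSpace ℝ (Fin d) := fun y => x 0 + AL y with hT
  have hTinj : Function.Injective T := by
    intro a b h
    exact hALinj (by simpa [hT] using h)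
  set SE : Set (EuclideanSpace ℝ (Fin d)) := ⇑q ⁻¹' Sset d with hSE
  have hSEmeas : MeasurableSet SE := q.measurable (measurableSet_Sset d)
  set TA : EuclideanSpace ℝ (Fin d) →ᵃ[ℝ] EuclideanSpace ℝ (Fin d) :=
    { toFun := T
      linear := AL
      map_vadd' := by
        intro p w
        show T (w + p) = AL w + T p
        simp only [hT, map_add]
        abel } with hTA
  set LQ : (Fin d → ℝ) ≃ₗ[ℝ] EuclideanSpace ℝ (Fin d) :=
    (WithLp.linearEquiv 2 ℝ (Fin d → ℝ)).symm with hLQ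
  have hLQapp : ∀ z : Fin d → ℝ, LQ z = q.symm z := fun z => rfl
  have hLQcoord : ∀ (z : Fin d → ℝ) (i : Fin d), (LQ z) i = z i := fun z i => rfl
  set TC : (Fin d → ℝ) →ᵃ[ℝ] EuclideanSpace ℝ (Fin d) :=
    TA.comp LQ.toLinearMap.toAffineMap with hTC
  have hTCapp : ∀ z : Fin d → ℝ, TC z = T (q.symm z) := fun z => rfl
  have hALsingle : ∀ i : Fin d, AL (LQ (Pi.single i (1:ℝ))) = v i := by
    intro i
    rw [hALapply]
    rw [Finset.sum_eq_single i (fun j _ hji => by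
      rw [show (LQ (Pi.single i (1:ℝ))) j = 0 by
        rw [hLQcoord, Pi.single_apply, if_neg hji], zero_smul]) (by simp)]
    rw [show (LQ (Pi.single i (1:ℝ))) i = 1 by rw [hLQcoord, Pi.single_apply, if_pos rfl],
      one_smul]
  have himg : τ = T '' SE := by
    have hpre : SE = ⇑q.symm '' Sset d := by
      rw [hSE]
      ext z
      simp only [Set.mem_preimage, Set.mem_image]
      constructor
      · intro h; exact ⟨q z, h, q.symm_apply_apply z⟩
      · rintro ⟨w, hw, hwz⟩; subst hwz; simpa using hw
    have hrange : Set.range x = ⇑TC '' (insert (0 : Fin d → ℝ)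
        (Set.range fun i => Pi.single i (1:ℝ))) := by
      rw [Set.image_insert_eq, ← Set.range_comp]
      have h0 : TC 0 = x 0 := by
        rw [hTCapp, show (q.symm 0 : EuclideanSpace ℝ (Fin d)) = (LQ 0 : EuclideanSpace ℝ (Fin d))
          from (hLQapp 0).symm, map_zero, hT]
        show x 0 + AL 0 = x 0
        rw [map_zero, add_zero]
      have hsing : ∀ i, (TC ∘ fun i => Pi.single i (1:ℝ)) i = x i.succ := by
        intro i
        show TC (Pi.single i (1:ℝ)) = x i.succ
        rw [hTCapp, show (q.symm (Pi.single i (1:ℝ)) : EuclideanSpace ℝ (Fin d))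
          = LQ (Pi.single i (1:ℝ)) from (hLQapp _).symm, hT]
        show x 0 + AL (LQ (Pi.single i (1:ℝ))) = x i.succ
        rw [hALsingle i, hv]
        show x 0 + (x i.succ - x 0) = x i.succ
        module
      rw [h0, funext hsing, Fin.range_fin_succ x]
      rfl
    rw [hτ, hrange, ← AffineMap.image_convexHull, ← Sset_eq_hull, hpre, ← Set.image_comp]
    congr 1
  -- pullback of the barycentric coordinates
  have hlin : ∀ (m : Fin (d+1)) (y : EuclideanSpace ℝ (Fin d)),
      lam m (T y) = (∑ i, y i * ((lam m) (x i.succ) - lam m (x 0))) + lam m (x 0) := by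
    intro m y
    have h1 : T y = AL y +ᵥ x 0 := by
      show T y = AL y + x 0
      rw [hT]
      exact add_comm _ _
    rw [h1, AffineMap.map_vadd]
    have h2 : (lam m).linear (AL y) = ∑ i, y i * ((lam m) (x i.succ) - lam m (x 0)) := by
      rw [hALapply, map_sum]
      apply Finset.sum_congr rfl
      intro i _
      rw [_root_.map_smul, smul_eq_mul]
      congr 1
      have h3 := AffineMap.linearMap_vsub (lam m) (x i.succ) (x 0)
      rw [hv]
      show (lam m).linear (x i.succ -ᵥ x 0) = _
      rw [h3]
      rfl
    rw [h2]
    rfl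
  have hcomp : ∀ (m : Fin (d+1)) (y : EuclideanSpace ℝ (Fin d)),
      lam m (T y) = bary d m (q y) := by
    intro m y
    induction m using Fin.cases with
    | zero =>
      rw [hlin]
      have hterm : ∀ i : Fin d, y i * ((lam 0) (x i.succ) - lam 0 (x 0)) = -(y i) := by
        intro i
        rw [hlam, hlam, if_neg (Fin.succ_ne_zero i).symm, if_pos rfl]
        ring
      rw [Finset.sum_congr rfl fun i _ => hterm i, hlam, if_pos rfl,
        Finset.sum_neg_distrib]
      show -∑ i, y i + 1 = bary d 0 (q y)
      show -∑ i, y i + 1 = 1 - ∑ i, (q y) i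
      show -∑ i, y i + 1 = 1 - ∑ i, y i
      ring
    | succ j =>
      rw [hlin]
      have hterm : ∀ i : Fin d, y i * ((lam j.succ) (x i.succ) - lam j.succ (x 0))
          = if i = j then y i else 0 := by
        intro i
        rw [hlam, hlam, if_neg (Fin.succ_ne_zero j)]
        by_cases hij : i = j
        · subst hij
          rw [if_pos rfl, if_pos rfl]
          ring
        · rw [if_neg (fun h => hij (Fin.succ_injective d h).symm), if_neg hij]
          ring
      rw [Finset.sum_congr rfl fun i _ => hterm i, Finset.sum_ite_eq' Finset.univ j y,
        hlam, if_neg (Fin.succ_ne_zero j)]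
      simp only [Finset.mem_univ, if_true, add_zero]
      show y j = bary d j.succ (q y)
      show y j = (q y) j
      rfl
  -- change of variables
  have hdet : ∀ g : EuclideanSpace ℝ (Fin d) → ℝ,
      ∫ y in τ, g y = |(AL.toContinuousLinearMap).det| * ∫ y in SE, g (T y) := by
    intro g
    rw [himg]
    rw [integral_image_eq_integral_abs_det_fderiv_smul volume hSEmeas
      (f' := fun _ => AL.toContinuousLinearMap)
      (fun y _ => by
        have h1 := (AL.toContinuousLinearMap.hasFDerivAt (x := y)).const_add (x 0)
        exact h1.hasFDerivWithinAt)
      hTinj.injOn g]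
    simp only [smul_eq_mul]
    rw [MeasureTheory.integral_const_mul]
  have hSEvol : volume SE = volume (Sset d) := by
    rw [hSE, hq]
    exact (EuclideanSpace.volume_preserving_symm_measurableEquiv_toLp (Fin d)).measure_preimage
      (measurableSet_Sset d).nullMeasurableSet
  have hvol : (volume τ).toReal
      = |(AL.toContinuousLinearMap).det| * (volume (Sset d)).toReal := by
    have h1 := hdet (fun _ => (1:ℝ))
    simp only [setIntegral_const, smul_eq_mul, mul_one] at h1
    simp only [measureReal_def] at h1
    rw [h1, hSEvol]
  have hmain := hdet (fun y => lam k y * lam l y)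
  simp only [] at hmain
  simp only [hcomp] at hmain
  have htr := (EuclideanSpace.volume_preserving_symm_measurableEquiv_toLp (Fin d)).setIntegral_preimage_emb
    q.measurableEmbedding (fun z => bary d k z * bary d l z) (Sset d)
  rw [show ⇑(MeasurableEquiv.toLp 2 (Fin d → ℝ)).symm ⁻¹' Sset d = SE from by rw [hSE, hq]] at htr
  rw [htr, bary_core d k l] at hmain
  rw [hmain, hvol]
  ring
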